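/- Let p ≥ 3 be an integer. Then for every integer m with 1 ≤ m ≤ p one has m^p / ((p−m)! · m!) < 3.592^p / (2·π·√(p−1)). -/

import Mathlib

open Real Filter Topology Finset

/-- Stirling lower bound `√(2πn)·(n/e)^n ≤ n!` for `n ≥ 1`. -/
private lemma my_stirling_lower (n : ℕ) (hn : 1 ≤ n) :
    Real.sqrt (2 * π * n) * ((n : ℝ) / Real.exp 1) ^ n ≤ (Nat.factorial n : ℝ) := by
  obtain ⟨k, rfl⟩ : ∃ k, n = k + 1 := ⟨n - 1, (Nat.succ_pred_eq_of_pos hn).symm⟩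
  have ht : Tendsto (Stirling.stirlingSeq ∘ Nat.succ) atTop (𝓝 (Real.sqrt π)) :=
    Stirling.tendsto_stirlingSeq_sqrt_pi.comp (tendsto_add_atTop_nat 1)
  have hsp : Real.sqrt π ≤ Stirling.stirlingSeq (k + 1) :=
    Stirling.stirlingSeq'_antitone.le_of_tendsto ht k
  set n := k + 1
  have hn0 : (0:ℝ) < (n : ℝ) := by positivity
  have hD : (0:ℝ) < Real.sqrt (2 * n) * ((n : ℝ) / Real.exp 1) ^ n := by positivity
  have hfac : Real.sqrt π * (Real.sqrt (2 * n) * ((n : ℝ) / Real.exp 1) ^ n)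
      ≤ (Nat.factorial n : ℝ) := by
    have := mul_le_mul_of_nonneg_right hsp hD.le
    rwa [Stirling.stirlingSeq, div_mul_cancel₀] at this
    exact hD.ne'
  calc Real.sqrt (2 * π * n) * ((n : ℝ) / Real.exp 1) ^ n
      = Real.sqrt π * (Real.sqrt (2 * n) * ((n : ℝ) / Real.exp 1) ^ n) := by
        rw [show 2 * π * (n:ℝ) = π * (2 * n) by ring, Real.sqrt_mul pi_pos.le]
        ring
    _ ≤ (Nat.factorial n : ℝ) := hfac

private lemma my_exp_num : Real.exp (1 + 125/449) < 3.592 := by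
  have hq : |(125/449 : ℝ)| ≤ 1 := by rw [abs_of_pos] <;> norm_num
  have h := Real.exp_bound hq (n := 5) (by norm_num)
  have hs : (∑ m ∈ range 5, (125/449:ℝ) ^ m / m.factorial)
      = 1 + 125/449 + (125/449)^2/2 + (125/449)^3/6 + (125/449)^4/24 := by
    simp [Finset.sum_range_succ, Nat.factorial]
  rw [hs, abs_of_pos (by norm_num : (0:ℝ) < 125/449)] at h
  have h2 : Real.exp (125/449 : ℝ)
      ≤ 1 + 125/449 + (125/449)^2/2 + (125/449)^3/6 + (125/449)^4/24
        + (125/449:ℝ)^5 * (6 / (120 * 5)) := by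
    have := (abs_sub_le_iff.mp h).1
    norm_num [Nat.factorial] at this ⊢
    linarith
  have he : Real.exp 1 < 2.7182818286 := Real.exp_one_lt_d9
  rw [Real.exp_add]
  have hp : (0:ℝ) < Real.exp (125/449) := Real.exp_pos _
  calc Real.exp 1 * Real.exp (125/449)
      < 2.7182818286 * Real.exp (125/449) := by nlinarith
    _ ≤ 2.7182818286 * (1 + 125/449 + (125/449)^2/2 + (125/449)^3/6 + (125/449)^4/24
        + (125/449:ℝ)^5 * (6 / (120 * 5))) := by nlinarith
    _ < 3.592 := by norm_num

private lemma my_a_facts : 1/3.592 < Real.log 3.592 - 1 := by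
  have h := (Real.lt_log_iff_exp_lt (by norm_num : (0:ℝ) < 3.592)).mpr my_exp_num
  have : (1/3.592 : ℝ) = 125/449 := by norm_num
  linarith

private lemma my_key_log {t : ℝ} (ht : 0 < t) :
    Real.log t < (Real.log 3.592 - 1) * (1 + t) := by
  set a : ℝ := Real.log 3.592 - 1 with ha_def
  clear_value a
  have ha0 : 0 < a := lt_trans (by norm_num) (ha_def ▸ my_a_facts)
  have h1 : Real.log (a * t) ≤ a * t - 1 := Real.log_le_sub_one_of_pos (by positivity)
  rw [Real.log_mul ha0.ne' ht.ne'] at h1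
  have h2 : Real.log (1/3.592) < Real.log a :=
    Real.log_lt_log (by norm_num) (by rw [ha_def]; exact my_a_facts)
  rw [show (1/3.592 : ℝ) = (3.592:ℝ)⁻¹ by norm_num, Real.log_inv] at h2
  have h3 : Real.log 3.592 = a + 1 := by rw [ha_def]; ring
  have h4 : a * (1 + t) = a + a * t := by ring
  rw [h4]
  linarith

private lemma my_core (m q : ℕ) (hm : 1 ≤ m) (hq : 1 ≤ q) :
    (m : ℝ) ^ (m + q) * Real.exp 1 ^ (m + q)
      < 3.592 ^ (m + q) * ((m : ℝ) ^ m * (q : ℝ) ^ q) := by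
  have hM : (0:ℝ) < m := by exact_mod_cast hm
  have hQ : (0:ℝ) < q := by exact_mod_cast hq
  have hL : (0:ℝ) < (m : ℝ) ^ (m + q) * Real.exp 1 ^ (m + q) := by positivity
  have hR : (0:ℝ) < (3.592:ℝ) ^ (m + q) * ((m : ℝ) ^ m * (q : ℝ) ^ q) := by positivity
  refine (Real.log_lt_log_iff hL hR).mp ?_
  have hkey := my_key_log (t := (m:ℝ)/q) (by positivity)
  have h2 : (q:ℝ) * Real.log ((m:ℝ)/q) < (Real.log 3.592 - 1) * ((q:ℝ) + m) := by
    have h3 := mul_lt_mul_of_pos_left hkey hQ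
    have h4 : (q:ℝ) * ((Real.log 3.592 - 1) * (1 + (m:ℝ)/q))
        = (Real.log 3.592 - 1) * ((q:ℝ) + m) := by field_simp
    linarith [h4 ▸ h3]
  rw [Real.log_div hM.ne' hQ.ne'] at h2
  rw [Real.log_mul (by positivity) (by positivity), Real.log_mul (by positivity) (by positivity),
    Real.log_mul (by positivity) (by positivity),
    Real.log_pow, Real.log_pow, Real.log_pow, Real.log_pow, Real.log_pow, Real.log_exp]
  push_cast
  nlinarith [h2]

private lemma my_mp_key (p : ℕ) (hp : 3 ≤ p) :
    2 * π * Real.sqrt ((p:ℝ) - 1) * Real.exp 1 ^ p < 3.592 ^ p * Real.sqrt (2 * π * p) := by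
  have he : Real.exp 1 < 2.7182818286 := Real.exp_one_lt_d9
  have he0 : (0:ℝ) < Real.exp 1 := Real.exp_pos 1
  rcases eq_or_lt_of_le hp with hp3 | hp4
  · subst hp3
    have h1 : ((3:ℕ):ℝ) - 1 = 2 := by norm_num
    rw [h1]
    have hs2 : Real.sqrt 2 < 1.41422 := by
      rw [Real.sqrt_lt' (by norm_num)]; norm_num
    have hs6 : (4.34:ℝ) < Real.sqrt (2 * π * ((3:ℕ):ℝ)) := by
      rw [show ((3:ℕ):ℝ) = (3:ℝ) by norm_num]
      rw [Real.lt_sqrt (by norm_num)]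
      nlinarith [Real.pi_gt_d2]
    have he3 : Real.exp 1 ^ 3 < 2.7182818286 ^ 3 := by
      exact pow_lt_pow_left₀ he he0.le (by norm_num)
    calc 2 * π * Real.sqrt 2 * Real.exp 1 ^ 3
        ≤ 2 * 3.15 * 1.41422 * (2.7182818286:ℝ) ^ 3 := by
          gcongr <;> first | exact Real.pi_lt_d2.le | exact hs2.le | exact he3.le
      _ < 3.592 ^ 3 * 4.34 := by norm_num
      _ ≤ 3.592 ^ 3 * Real.sqrt (2 * π * ((3:ℕ):ℝ)) := by
          gcongr <;> exact hs6.le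
  · have hp4' : 4 ≤ p := hp4
    have hpR : (4:ℝ) ≤ (p:ℝ) := by exact_mod_cast hp4'
    have hsplit : Real.sqrt (2 * π * p) = Real.sqrt (2 * π) * Real.sqrt p := by
      rw [Real.sqrt_mul (by positivity)]
    have h25 : (2.5:ℝ) ≤ Real.sqrt (2 * π) := by
      rw [show (2.5:ℝ) = Real.sqrt (2.5 ^ 2) from (Real.sqrt_sq (by norm_num)).symm]
      apply Real.sqrt_le_sqrt
      nlinarith [Real.pi_gt_d2]
    have hsp : Real.sqrt ((p:ℝ) - 1) ≤ Real.sqrt p := Real.sqrt_le_sqrt (by linarith)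
    have hspos : (0:ℝ) < Real.sqrt p := Real.sqrt_pos.mpr (by linarith)
    have hratio : (Real.exp 1 / 3.592) ^ p ≤ (Real.exp 1 / 3.592) ^ 4 := by
      apply pow_le_pow_of_le_one (by positivity) _ hp4'
      rw [div_le_one (by norm_num)]
      linarith
    rw [div_pow, div_pow, div_le_div_iff₀ (by positivity) (by positivity)] at hratio
    have he4 : Real.exp 1 ^ 4 ≤ 2.7182818286 ^ 4 := pow_le_pow_left₀ he0.le he.le 4
    have hP0 : (0:ℝ) < 3.592 ^ p := by positivity
    have hE0 : (0:ℝ) < Real.exp 1 ^ p := by positivity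
    have hep : Real.exp 1 ^ p * 6.3 < 3.592 ^ p * 2.5 := by
      nlinarith [hratio, he4, hP0, hE0]
    have hpi : 2 * π ≤ 6.3 := by nlinarith [Real.pi_lt_d2]
    calc 2 * π * Real.sqrt ((p:ℝ) - 1) * Real.exp 1 ^ p
        ≤ 6.3 * Real.sqrt p * Real.exp 1 ^ p := by
          apply mul_le_mul_of_nonneg_right _ hE0.le
          apply mul_le_mul hpi hsp (Real.sqrt_nonneg _) (by norm_num)
      _ = Real.exp 1 ^ p * 6.3 * Real.sqrt p := by ring
      _ < 3.592 ^ p * 2.5 * Real.sqrt p := mul_lt_mul_of_pos_right hep hspos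
      _ ≤ 3.592 ^ p * Real.sqrt (2 * π) * Real.sqrt p := by
          have h6 : 3.592 ^ p * 2.5 ≤ 3.592 ^ p * Real.sqrt (2 * π) :=
            mul_le_mul_of_nonneg_left h25 hP0.le
          exact mul_le_mul_of_nonneg_right h6 (Real.sqrt_nonneg _)
      _ = 3.592 ^ p * Real.sqrt (2 * π * p) := by rw [hsplit]; ring

/-- **Theorem 4.14.** For `p ≥ 3` and every `1 ≤ m ≤ p`,
`m^p/((p−m)!·m!) < 3.592^p/(2·π·√(p−1))`; this bounds the maximum internal
amplification factor `M^{EE}_p({0})` of the order-`p` explicit Euler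
extrapolation method at `z = 0`. -/
theorem euler_extrapolation_amplification_at_zero_upper
    (p : ℕ) (hp : 3 ≤ p) (m : ℕ) (hm1 : 1 ≤ m) (hmp : m ≤ p) :
    (m : ℝ) ^ p / ((Nat.factorial (p - m) : ℝ) * (Nat.factorial m : ℝ)) <
      3.592 ^ p / (2 * Real.pi * Real.sqrt ((p : ℝ) - 1)) := by
  have hpR : (3:ℝ) ≤ (p:ℝ) := by exact_mod_cast hp
  have hsq1 : (0:ℝ) < Real.sqrt ((p:ℝ) - 1) := Real.sqrt_pos.mpr (by linarith)
  have he0 : (0:ℝ) < Real.exp 1 := Real.exp_pos 1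
  rcases eq_or_lt_of_le hmp with rfl | hlt
  · -- m = p
    rw [Nat.sub_self, Nat.factorial_zero]
    rw [div_lt_div_iff₀ (by positivity) (by positivity)]
    have hst := my_stirling_lower m hm1
    have hkey := my_mp_key m hp
    rw [div_pow] at hst
    have hEm : (0:ℝ) < Real.exp 1 ^ m := by positivity
    calc (m:ℝ) ^ m * (2 * π * Real.sqrt ((m:ℝ) - 1))
        = 2 * π * Real.sqrt ((m:ℝ) - 1) * Real.exp 1 ^ m * ((m:ℝ) ^ m / Real.exp 1 ^ m) := by
          field_simp
      _ < 3.592 ^ m * Real.sqrt (2 * π * m) * ((m:ℝ) ^ m / Real.exp 1 ^ m) := by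
          apply mul_lt_mul_of_pos_right hkey
          positivity
      _ = 3.592 ^ m * (Real.sqrt (2 * π * m) * ((m:ℝ) ^ m / Real.exp 1 ^ m)) := by ring
      _ ≤ 3.592 ^ m * (((Nat.factorial 0 : ℕ):ℝ) * (Nat.factorial m : ℝ)) := by
          rw [Nat.factorial_zero]
          push_cast
          rw [one_mul]
          exact mul_le_mul_of_nonneg_left hst (by positivity)
  · -- m < p
    obtain ⟨q, rfl⟩ : ∃ q, p = m + q := ⟨p - m, (Nat.add_sub_cancel' hmp).symm⟩
    have hq1 : 1 ≤ q := by omega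
    have hM : (0:ℝ) < m := by exact_mod_cast hm1
    have hQ : (0:ℝ) < q := by exact_mod_cast hq1
    have hM1 : (1:ℝ) ≤ m := by exact_mod_cast hm1
    have hQ1 : (1:ℝ) ≤ q := by exact_mod_cast hq1
    rw [show m + q - m = q from by omega]
    have hsqm : (0:ℝ) < Real.sqrt ((q:ℝ) * m) := Real.sqrt_pos.mpr (by positivity)
    have hst1 := my_stirling_lower q hq1
    have hst2 := my_stirling_lower m hm1
    rw [div_pow] at hst1 hst2
    have hsplit : Real.sqrt (2 * π * q) * Real.sqrt (2 * π * m)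
        = 2 * π * Real.sqrt ((q:ℝ) * m) := by
      rw [← Real.sqrt_mul (by positivity),
        show (2 * π * (q:ℝ)) * (2 * π * (m:ℝ)) = (2 * π) ^ 2 * ((q:ℝ) * m) by ring,
        Real.sqrt_mul (by positivity), Real.sqrt_sq (by positivity)]
    have hprod : 2 * π * Real.sqrt ((q:ℝ) * m) * ((q:ℝ) ^ q * (m:ℝ) ^ m)
          / Real.exp 1 ^ (m + q)
        ≤ (Nat.factorial q : ℝ) * (Nat.factorial m : ℝ) := by
      have h0 := mul_le_mul hst1 hst2 (by positivity) (by positivity)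
      calc 2 * π * Real.sqrt ((q:ℝ) * m) * ((q:ℝ) ^ q * (m:ℝ) ^ m) / Real.exp 1 ^ (m + q)
          = (Real.sqrt (2 * π * q) * ((q:ℝ) ^ q / Real.exp 1 ^ q))
            * (Real.sqrt (2 * π * m) * ((m:ℝ) ^ m / Real.exp 1 ^ m)) := by
            rw [← hsplit, pow_add]
            field_simp
        _ ≤ (Nat.factorial q : ℝ) * (Nat.factorial m : ℝ) := h0
    have hcore := my_core m q hm1 hq1
    have hsqrt : Real.sqrt (((m + q : ℕ):ℝ) - 1) ≤ Real.sqrt ((q:ℝ) * m) := by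
      apply Real.sqrt_le_sqrt
      push_cast
      nlinarith
    rw [div_lt_div_iff₀ (by positivity) (by positivity)]
    calc (m:ℝ) ^ (m + q) * (2 * π * Real.sqrt (((m + q : ℕ):ℝ) - 1))
        ≤ (m:ℝ) ^ (m + q) * (2 * π * Real.sqrt ((q:ℝ) * m)) := by gcongr
      _ = ((m:ℝ) ^ (m + q) * Real.exp 1 ^ (m + q))
          * (2 * π * Real.sqrt ((q:ℝ) * m) / Real.exp 1 ^ (m + q)) := by
          field_simp
      _ < (3.592 ^ (m + q) * ((m:ℝ) ^ m * (q:ℝ) ^ q))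
          * (2 * π * Real.sqrt ((q:ℝ) * m) / Real.exp 1 ^ (m + q)) := by
          apply mul_lt_mul_of_pos_right hcore
          positivity
      _ = 3.592 ^ (m + q)
          * (2 * π * Real.sqrt ((q:ℝ) * m) * ((q:ℝ) ^ q * (m:ℝ) ^ m)
            / Real.exp 1 ^ (m + q)) := by ring
      _ ≤ 3.592 ^ (m + q) * ((Nat.factorial q : ℝ) * (Nat.factorial m : ℝ)) := by
          exact mul_le_mul_of_nonneg_left hprod (by positivity)
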